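/- There exists a strongly connected, weight-balanced digraph on 5 vertices whose Laplacian has a nonzero eigenvalue λ with √3 |Im(λ)| > Re(λ). In particular, for a weight-balanced strongly connected digraph the eigenvalues of the Laplacian need not lie in the sector {z : √3 |Im(z)| ≤ Re(z)} ∪ {0}. -/

import Mathlib

open Matrix BigOperators

/-- `μ` is an eigenvalue of the square complex matrix `M`. -/
def IsEigOf {m : Type*} [Fintype m] (M : Matrix m m ℂ) (μ : ℂ) : Prop :=
  ∃ v : m → ℂ, v ≠ 0 ∧ M *ᵥ v = μ • v

open Fin.NatCast in
lemma cycle_reach (n : ℕ) (i : Fin 5) :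
    Relation.TransGen (fun a b : Fin 5 => b = a + 1) i (i + ((n + 1 : ℕ) : Fin 5)) := by
  induction n with
  | zero => exact Relation.TransGen.single (by push_cast; ring)
  | succ n ih => exact Relation.TransGen.tail ih (by push_cast; abel)

open Fin.NatCast in
lemma cycle_transGen (i j : Fin 5) (hij : i ≠ j) :
    Relation.TransGen (fun a b : Fin 5 => b = a + 1) i j := by
  have h0 : j - i ≠ 0 := sub_ne_zero.mpr (Ne.symm hij)
  obtain ⟨n, hn⟩ : ∃ n, (j - i).val = n + 1 :=
    Nat.exists_eq_succ_of_ne_zero (Fin.val_ne_zero_iff.mpr h0)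
  have h := cycle_reach n i
  rw [← hn, Fin.cast_val_eq_self] at h
  simpa using h

theorem exists_weight_balanced_digraph_outside_sector :
    ∃ A : Matrix (Fin 5) (Fin 5) ℝ,
      (∀ i j, 0 ≤ A i j) ∧
      (∀ i j : Fin 5, i ≠ j → Relation.TransGen (fun a b => 0 < A a b) i j) ∧
      (∀ i, ∑ j, A i j = ∑ j, A j i) ∧
      ∃ lam : ℂ,
        IsEigOf ((Matrix.diagonal (fun i => ∑ j, A i j) - A).map (Complex.ofReal)) lam ∧
        lam ≠ 0 ∧ Real.sqrt 3 * |lam.im| > lam.re := by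
  classical
  set A : Matrix (Fin 5) (Fin 5) ℝ := fun i j => if j = i + 1 then 1 else 0 with hA
  have hd : ∀ i : Fin 5, ∑ j, A i j = 1 := by
    intro i; simp [hA, Finset.sum_ite_eq']
  refine ⟨A, ?_, ?_, ?_, ?_⟩
  · intro i j; simp only [hA]; positivity
  · intro i j hij
    have h : (fun a b : Fin 5 => 0 < A a b) = fun a b => b = a + 1 := by
      funext a b
      simp only [hA]
      by_cases hb : b = a + 1 <;> simp [hb]
    rw [h]; exact cycle_transGen i j hij
  · intro i
    have h2 : ∑ j, A j i = 1 := by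
      have he : ∀ j : Fin 5, A j i = if j = i - 1 then (1:ℝ) else 0 := by
        intro j; simp only [hA]
        by_cases h : j = i - 1
        · subst h; rw [if_pos (sub_add_cancel _ _).symm, if_pos rfl]
        · rw [if_neg, if_neg h]; intro hc; apply h; rw [hc]; exact (add_sub_cancel_right _ _).symm
      simp [he, Finset.sum_ite_eq']
    rw [hd i, h2]
  · set θ : ℝ := 2 * Real.pi / 5 with hθ
    set ω : ℂ := Complex.exp (θ * Complex.I) with hω
    have hω5 : ω ^ 5 = 1 := by
      rw [hω, ← Complex.exp_nat_mul]
      have h5 : ((5 : ℕ) : ℂ) * ((θ : ℂ) * Complex.I) = 2 * Real.pi * Complex.I := by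
        push_cast [hθ]; ring
      rw [h5, Complex.exp_two_pi_mul_I]
    have hpow : ∀ m : ℕ, ω ^ (m % 5) = ω ^ m := by
      intro m
      conv_rhs => rw [← Nat.div_add_mod m 5]
      rw [pow_add, pow_mul, hω5, one_pow, one_mul]
    have hre : ω.re = Real.cos θ := by rw [hω, Complex.exp_ofReal_mul_I_re]
    have him : ω.im = Real.sin θ := by rw [hω, Complex.exp_ofReal_mul_I_im]
    have hπ := Real.pi_pos
    have hθpos : 0 < θ := by rw [hθ]; positivity
    have hθlt : θ < Real.pi / 2 := by rw [hθ]; nlinarith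
    have hsin : Real.sin (Real.pi / 3) < Real.sin θ := by
      apply Real.strictMonoOn_sin ⟨by linarith, le_of_lt (by linarith)⟩
        ⟨by linarith, le_of_lt hθlt⟩
      rw [hθ]; nlinarith
    have hcos : 0 < Real.cos θ := Real.cos_pos_of_mem_Ioo ⟨by linarith, hθlt⟩
    have hsinpos : 0 < Real.sin θ :=
      Real.sin_pos_of_pos_of_lt_pi hθpos (by linarith)
    set v : Fin 5 → ℂ := fun j => ω ^ (j : ℕ) with hv
    have hvsucc : ∀ i : Fin 5, v (i + 1) = ω * v i := by
      intro i
      show ω ^ ((i + 1 : Fin 5) : ℕ) = ω * ω ^ (i : ℕ)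
      have h1 : ((i + 1 : Fin 5) : ℕ) = (i.val + 1) % 5 := by
        simp [Fin.add_def]
      rw [h1, hpow, pow_succ]; ring
    refine ⟨1 - ω, ⟨v, ?_, ?_⟩, ?_, ?_⟩
    · intro h
      have h0 : v 0 = 0 := congrFun h 0
      rw [hv] at h0
      simp at h0
    · funext i
      have key : ∀ j : Fin 5,
          (((Matrix.diagonal (fun i => ∑ j, A i j) - A).map Complex.ofReal) i j) * v j
            = (if i = j then v j else 0) - (if j = i + 1 then v j else 0) := by
        intro j
        simp only [Matrix.map_apply, Matrix.sub_apply, Matrix.diagonal_apply, hd]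
        simp only [hA]
        push_cast [apply_ite Complex.ofReal]
        split_ifs with h1 h2 h2
        · exfalso
          rw [← h1] at h2
          exact absurd (left_eq_add.mp h2) (by decide)
        · ring
        · ring
        · ring
      show ∑ j, (((Matrix.diagonal (fun i => ∑ j, A i j) - A).map Complex.ofReal) i j) * v j
          = ((1 - ω) • v) i
      rw [Finset.sum_congr rfl (fun j _ => key j), Finset.sum_sub_distrib,
        Finset.sum_ite_eq, Finset.sum_ite_eq']
      simp only [Finset.mem_univ, if_true]
      rw [hvsucc i, Pi.smul_apply, smul_eq_mul]
      ring
    · intro h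
      have h1 : ω.im = 0 := by
        have := congrArg Complex.im (sub_eq_zero.mp h)
        simpa using this.symm
      rw [him] at h1; linarith
    · have h1 : (1 - ω).re = 1 - Real.cos θ := by simp [hre]
      have h2 : (1 - ω).im = -Real.sin θ := by simp [him]
      rw [h1, h2, abs_neg, abs_of_pos hsinpos]
      have hs3 : Real.sin (Real.pi / 3) = Real.sqrt 3 / 2 := Real.sin_pi_div_three
      nlinarith [Real.sq_sqrt (by norm_num : (3:ℝ) ≥ 0), Real.sqrt_nonneg 3]
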